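/- arXiv:1808.04221 — 5 statements merged into one kernel-verified Lean document; each statement's English description precedes it below -/
import Mathlib

section
/- Partitions μ and ν of the same positive integer n are rook equivalent if and only if S_μ = S_ν as multisets. -/
/-- `μ : ℕ → ℕ` represents a partition via its parts `μ 1 ≥ μ 2 ≥ ⋯`; the index `0` is
unused and required to be `0`.  The parts are weakly decreasing and only finitely many
are nonzero. -/
def IsPartition (μ : ℕ → ℕ) : Prop :=
  μ 0 = 0 ∧ (∀ i, 1 ≤ i → μ (i + 1) ≤ μ i) ∧ {i | μ i ≠ 0}.Finite

/-- The weight `|μ|` of a partition: the sum of its parts. -/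
noncomputable def pweight (μ : ℕ → ℕ) : ℕ := ∑ᶠ i, μ i

/-- The length `ℓ(μ)`: the number of nonzero parts. -/
noncomputable def plength (μ : ℕ → ℕ) : ℕ := Set.ncard {i | 1 ≤ i ∧ μ i ≠ 0}

/-- A partition is strict if its nonzero parts are pairwise distinct. -/
def IsStrict (μ : ℕ → ℕ) : Prop := ∀ i j, 1 ≤ i → i < j → μ j ≠ 0 → μ j < μ i

/-- `(i, j)` is a cell of the Ferrers board of `μ`. -/
def Cell (μ : ℕ → ℕ) (i j : ℕ) : Prop := 1 ≤ i ∧ 1 ≤ j ∧ j ≤ μ i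

/-- The Ferrers board of `μ` as a set of cells. -/
def Board (μ : ℕ → ℕ) : Set (ℕ × ℕ) := {p | Cell μ p.1 p.2}

/-- The number of ways to place `k` non-attacking rooks on the Ferrers board of `μ`,
i.e. the number of `k`-element subsets of the board whose cells have pairwise distinct
row indices and pairwise distinct column indices. -/
noncomputable def rookCount (μ : ℕ → ℕ) (k : ℕ) : ℕ :=
  Set.ncard {s : Finset (ℕ × ℕ) | s.card = k ∧ (∀ p ∈ s, Cell μ p.1 p.2) ∧
    ∀ p ∈ s, ∀ q ∈ s, p ≠ q → p.1 ≠ q.1 ∧ p.2 ≠ q.2}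

/-- Rook equivalence of partitions. -/
def RookEquiv (μ ν : ℕ → ℕ) : Prop := ∀ k, rookCount μ k = rookCount ν k

/-- `α` contains `μ` as a pattern: there are strictly increasing functions `f, g` on the
positive integers such that `(i, j)` is a cell of `μ` iff `(f i, g j)` is a cell of `α`. -/
def Contains (α μ : ℕ → ℕ) : Prop :=
  ∃ f g : ℕ → ℕ,
    (∀ i, 1 ≤ i → 1 ≤ f i) ∧ (∀ j, 1 ≤ j → 1 ≤ g j) ∧
    (∀ i j, 1 ≤ i → i < j → f i < f j) ∧
    (∀ i j, 1 ≤ i → i < j → g i < g j) ∧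
    (∀ i j, 1 ≤ i → 1 ≤ j → (Cell μ i j ↔ Cell α (f i) (g j)))

/-- `P_n(μ)`: the set of partitions of `n` containing `μ`. -/
def PnSet (n : ℕ) (μ : ℕ → ℕ) : Set (ℕ → ℕ) :=
  {α | IsPartition α ∧ pweight α = n ∧ Contains α μ}

/-- `P_n(μ, k)`: the members of `P_n(μ)` whose first part is `k + μ 1`. -/
def PnSetK (n : ℕ) (μ : ℕ → ℕ) (k : ℕ) : Set (ℕ → ℕ) :=
  {α | α ∈ PnSet n μ ∧ α 1 = k + μ 1}

/-- Wilf equivalence of partitions. -/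
def WilfEquiv (μ ν : ℕ → ℕ) : Prop :=
  ∀ n, 1 ≤ n → (PnSet n μ).ncard = (PnSet n ν).ncard

/-- The multiplicity of `v` among the parts `μ 1, μ 2, …` of `μ`. -/
noncomputable def partCount (μ : ℕ → ℕ) (v : ℕ) : ℕ := Set.ncard {i | 1 ≤ i ∧ μ i = v}

/-- `γ` is the extension of `ν` by the pair `(α, β)`: `γ` is a partition whose multiset of
nonzero parts is the multiset union of the nonzero parts of `ν + α` and those of `β`. -/
def IsExtension (ν α β γ : ℕ → ℕ) : Prop :=
  IsPartition γ ∧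
  ∀ v, 1 ≤ v → partCount γ v = partCount (fun i => ν i + α i) v + partCount β v

/-- `ν` is the `(i, j)`-transform of `μ`: the board of `ν` is obtained from the board of
`μ` by replacing the subboard of cells weakly southeast of `(i, j)` by its conjugate. -/
def IsTransform (i j : ℕ) (μ ν : ℕ → ℕ) : Prop :=
  IsPartition μ ∧ IsPartition ν ∧ 1 ≤ i ∧ 1 ≤ j ∧
  Board ν = (Board μ \ {p ∈ Board μ | i ≤ p.1 ∧ j ≤ p.2}) ∪
    (fun p : ℕ × ℕ => (i + (p.2 - j), j + (p.1 - i))) '' {p ∈ Board μ | i ≤ p.1 ∧ j ≤ p.2}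

/-- One step: `ν` is an `(i, 1)`-transform of `μ` for some `i`. -/
def TransformRel1 (μ ν : ℕ → ℕ) : Prop := ∃ i, IsTransform i 1 μ ν

/-- `(i, 1)`-equivalence: a finite (possibly empty) sequence of `(i, 1)`-transformations. -/
def TransformEquiv1 : (ℕ → ℕ) → (ℕ → ℕ) → Prop := Relation.ReflTransGen TransformRel1

/-- One step: `ν` is an `(i, j)`-transform of `μ` for some `i, j`. -/
def TransformRel (μ ν : ℕ → ℕ) : Prop := ∃ i j, IsTransform i j μ ν

/-- Differing by a finite sequence of `(i, j)`-transformations. -/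
def TransformEquiv : (ℕ → ℕ) → (ℕ → ℕ) → Prop := Relation.ReflTransGen TransformRel

/-- Row `i` of `μ` is salient if `i + μ i ≥ j + μ j` for some `j > i`. -/
def Salient (μ : ℕ → ℕ) (i : ℕ) : Prop := ∃ j, i < j ∧ j + μ j ≤ i + μ i

/-- The multiplicity of `v` in the multiset `S_μ = {i + μ i : row i of μ is salient}`. -/
noncomputable def salientCount (μ : ℕ → ℕ) (v : ℕ) : ℕ :=
  Set.ncard {i | 1 ≤ i ∧ Salient μ i ∧ i + μ i = v}

/-- The staircase rank of `μ`: the largest `k` with `μ i ≥ k - i + 1` for `1 ≤ i ≤ k`. -/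
noncomputable def staircaseRank (μ : ℕ → ℕ) : ℕ :=
  sSup {k | ∀ i, 1 ≤ i → i ≤ k → k + 1 ≤ μ i + i}

/-- The number of cells of the L in `μ` with corner `p = (i, j)`: the cells `(i, x)` of `μ`
with `x ≥ j` together with the cells `(y, j)` with `1 ≤ y ≤ i`. -/
def LWeight (μ : ℕ → ℕ) (p : ℕ × ℕ) : ℕ := (μ p.1 - p.2) + p.1

/-- `c` lists the corners of a nested sequence of `k` L's in `μ`: each corner is a cell of
`μ`, and later corners are strictly above and strictly to the right of earlier ones. -/
def IsNested (μ : ℕ → ℕ) {k : ℕ} (c : Fin k → ℕ × ℕ) : Prop :=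
  (∀ a, Cell μ (c a).1 (c a).2) ∧
  ∀ a b : Fin k, a < b → (c b).1 < (c a).1 ∧ (c a).2 < (c b).2

/-- `w_k(μ)`: the maximum weight of a sequence of `k` nested L's in `μ`
(`0` if there is no such sequence). -/
noncomputable def nestedLMax (μ : ℕ → ℕ) (k : ℕ) : ℕ :=
  sSup {w | ∃ c : Fin k → ℕ × ℕ, IsNested μ c ∧ ∑ a, LWeight μ (c a) = w}

open Finset in
theorem test_placeholder : True := trivial

namespace RookAux
open Finset

/-- weakly decreasing on positive indices -/
def antit (μ : ℕ → ℕ) : Prop := ∀ i j, 1 ≤ i → i ≤ j → μ j ≤ μ i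

theorem antit_of_isPartition {μ : ℕ → ℕ} (h : IsPartition μ) : antit μ := by
  intro i j hi hij
  induction j with
  | zero => omega
  | succ m ih =>
    rcases Nat.lt_or_ge m 1 with hm | hm
    · have h1 : i = 1 := by omega
      have h2 : m = 0 := by omega
      subst h1; subst h2; norm_num
    · rcases Nat.eq_or_lt_of_le hij with rfl | hlt
      · exact le_rfl
      · exact le_trans (h.2.1 m hm) (ih (by omega))

noncomputable section

open scoped Classical

/-- placements of `k` nonattacking rooks on rows `r..m` of `μ` -/
def PlF (μ : ℕ → ℕ) (r m k : ℕ) : Finset (Finset (ℕ × ℕ)) :=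
  ((Finset.Icc 1 m ×ˢ Finset.Icc 1 (μ 1)).powerset).filter
    (fun s => s.card = k ∧ (∀ p ∈ s, Cell μ p.1 p.2 ∧ r ≤ p.1 ∧ p.1 ≤ m) ∧
      ∀ p ∈ s, ∀ q ∈ s, p ≠ q → p.1 ≠ q.1 ∧ p.2 ≠ q.2)

def A (μ : ℕ → ℕ) (r m k : ℕ) : ℕ := (PlF μ r m k).card

theorem mem_PlF {μ : ℕ → ℕ} (hμ : antit μ) {r m k : ℕ} {s : Finset (ℕ × ℕ)} :
    s ∈ PlF μ r m k ↔ (s.card = k ∧ (∀ p ∈ s, Cell μ p.1 p.2 ∧ r ≤ p.1 ∧ p.1 ≤ m) ∧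
      ∀ p ∈ s, ∀ q ∈ s, p ≠ q → p.1 ≠ q.1 ∧ p.2 ≠ q.2) := by
  unfold PlF
  simp only [Finset.mem_filter, Finset.mem_powerset, and_iff_right_iff_imp]
  rintro ⟨-, hcell, -⟩
  intro p hp
  obtain ⟨⟨h1, h2, h3⟩, h4, h5⟩ := hcell p hp
  simp only [Finset.mem_product, Finset.mem_Icc]
  exact ⟨⟨h1, h5⟩, h2, le_trans h3 (hμ 1 p.1 le_rfl h1)⟩

theorem rookCount_eq_A {μ : ℕ → ℕ} (hμ : antit μ) {m : ℕ} (hm : ∀ i, m < i → μ i = 0)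
    (k : ℕ) : rookCount μ k = A μ 1 m k := by
  have : {s : Finset (ℕ × ℕ) | s.card = k ∧ (∀ p ∈ s, Cell μ p.1 p.2) ∧
      ∀ p ∈ s, ∀ q ∈ s, p ≠ q → p.1 ≠ q.1 ∧ p.2 ≠ q.2} = ↑(PlF μ 1 m k) := by
    ext s
    simp only [Set.mem_setOf_eq, Finset.coe_mem, Finset.mem_coe, mem_PlF hμ]
    constructor
    · rintro ⟨h1, h2, h3⟩
      refine ⟨h1, fun p hp => ⟨h2 p hp, (h2 p hp).1, ?_⟩, h3⟩
      by_contra hc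
      have h0 : μ p.1 = 0 := hm p.1 (by omega)
      obtain ⟨-, g2, g3⟩ := h2 p hp
      omega
    · rintro ⟨h1, h2, h3⟩
      exact ⟨h1, fun p hp => (h2 p hp).1, h3⟩
  rw [rookCount, this, Set.ncard_coe_finset, A]

theorem A_zero (μ : ℕ → ℕ) (r m : ℕ) : A μ r m 0 = 1 := by
  have : PlF μ r m 0 = {∅} := by
    ext s
    unfold PlF
    simp only [Finset.mem_filter, Finset.mem_powerset, Finset.mem_singleton,
      Finset.card_eq_zero]
    constructor
    · rintro ⟨-, h, -⟩; exact h
    · rintro rfl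
      simp
  rw [A, this, Finset.card_singleton]

theorem A_gt (μ : ℕ → ℕ) {r m k : ℕ} (h : m < r) (hk : 1 ≤ k) : A μ r m k = 0 := by
  rw [A, Finset.card_eq_zero]
  ext s
  unfold PlF
  simp only [Finset.mem_filter, Finset.mem_powerset, Finset.notMem_empty, iff_false]
  rintro ⟨-, hcard, hcell, -⟩
  have : s.Nonempty := by
    rw [← Finset.card_pos, hcard]; omega
  obtain ⟨p, hp⟩ := this
  obtain ⟨-, h4, h5⟩ := hcell p hp
  omega

theorem A_rows {μ : ℕ → ℕ} (hμ : antit μ) {r m k : ℕ} (h : A μ r m k ≠ 0) :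
    k ≤ m + 1 - r := by
  have h' : (PlF μ r m k).Nonempty := Finset.card_pos.mp (Nat.pos_of_ne_zero h)
  obtain ⟨s, hs⟩ := h'
  rw [mem_PlF hμ] at hs
  obtain ⟨hcard, hcell, hdist⟩ := hs
  have hinj : Set.InjOn Prod.fst (s : Set (ℕ × ℕ)) := by
    intro p hp q hq hpq
    by_contra hne
    exact ((hdist p hp q hq (by simpa using hne)).1) hpq
  have h1 : (s.image Prod.fst).card = s.card := Finset.card_image_of_injOn hinj
  have h2 : s.image Prod.fst ⊆ Finset.Icc r m := by
    intro i hi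
    simp only [Finset.mem_image] at hi
    obtain ⟨p, hp, rfl⟩ := hi
    obtain ⟨-, h4, h5⟩ := hcell p hp
    simp only [Finset.mem_Icc]
    exact ⟨h4, h5⟩
  have := Finset.card_le_card h2
  rw [h1, hcard, Nat.card_Icc] at this
  omega

theorem A_cols {μ : ℕ → ℕ} (hμ : antit μ) {r m k : ℕ} (hr : 1 ≤ r)
    (h : A μ r m k ≠ 0) : k ≤ μ r := by
  have h' : (PlF μ r m k).Nonempty := Finset.card_pos.mp (Nat.pos_of_ne_zero h)
  obtain ⟨s, hs⟩ := h'
  rw [mem_PlF hμ] at hs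
  obtain ⟨hcard, hcell, hdist⟩ := hs
  have hinj : Set.InjOn Prod.snd (s : Set (ℕ × ℕ)) := by
    intro p hp q hq hpq
    by_contra hne
    exact ((hdist p hp q hq (by simpa using hne)).2) hpq
  have h1 : (s.image Prod.snd).card = s.card := Finset.card_image_of_injOn hinj
  have h2 : s.image Prod.snd ⊆ Finset.Icc 1 (μ r) := by
    intro j hj
    simp only [Finset.mem_image] at hj
    obtain ⟨p, hp, rfl⟩ := hj
    obtain ⟨⟨g1, g2, g3⟩, h4, h5⟩ := hcell p hp
    simp only [Finset.mem_Icc]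
    exact ⟨g2, le_trans g3 (hμ r p.1 hr h4)⟩
  have := Finset.card_le_card h2
  rw [h1, hcard, Nat.card_Icc] at this
  omega

end

end RookAux
namespace RookAux
open Finset

theorem A_rec {μ : ℕ → ℕ} (hμ : antit μ) {r m k : ℕ} (hr : 1 ≤ r) (hrm : r ≤ m)
    (hk : 1 ≤ k) :
    A μ r m k = A μ (r+1) m k + (μ r - (k-1)) * A μ (r+1) m (k-1) := by
  classical
  have hsplit := Finset.card_filter_add_card_filter_not
    (s := PlF μ r m k) (p := fun s => ∀ p ∈ s, p.1 ≠ r)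
  -- part 1 : no rook in row r
  have hpart1 : (PlF μ r m k).filter (fun s => ∀ p ∈ s, p.1 ≠ r) = PlF μ (r+1) m k := by
    ext s
    simp only [Finset.mem_filter, mem_PlF hμ]
    constructor
    · rintro ⟨⟨h1, h2, h3⟩, h4⟩
      refine ⟨h1, fun p hp => ?_, h3⟩
      obtain ⟨g1, g2, g3⟩ := h2 p hp
      have := h4 p hp
      exact ⟨g1, by omega, g3⟩
    · rintro ⟨h1, h2, h3⟩
      refine ⟨⟨h1, fun p hp => ?_, h3⟩, fun p hp => ?_⟩
      · obtain ⟨g1, g2, g3⟩ := h2 p hp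
        exact ⟨g1, by omega, g3⟩
      · have := (h2 p hp).2.1
        omega
  -- part 2 : rook in row r
  have hpart2 : ((PlF μ r m k).filter (fun s => ¬ ∀ p ∈ s, p.1 ≠ r)).card
      = (μ r - (k-1)) * A μ (r+1) m (k-1) := by
    set S := (PlF μ (r+1) m (k-1)).sigma
      (fun s' => Finset.Icc 1 (μ r) \ s'.image Prod.snd) with hS
    have himg : ∀ s' ∈ PlF μ (r+1) m (k-1), s'.image Prod.snd ⊆ Finset.Icc 1 (μ r) := by
      intro s' hs'
      rw [mem_PlF hμ] at hs'
      intro j hj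
      simp only [Finset.mem_image] at hj
      obtain ⟨p, hp, rfl⟩ := hj
      obtain ⟨⟨g1, g2, g3⟩, g4, g5⟩ := hs'.2.1 p hp
      simp only [Finset.mem_Icc]
      exact ⟨g2, le_trans g3 (hμ r p.1 hr (by omega))⟩
    have hcardimg : ∀ s' ∈ PlF μ (r+1) m (k-1), (s'.image Prod.snd).card = k - 1 := by
      intro s' hs'
      rw [mem_PlF hμ] at hs'
      rw [← hs'.1]
      apply Finset.card_image_of_injOn
      intro p hp q hq hpq
      by_contra hne
      exact ((hs'.2.2 p hp q hq (by simpa using hne)).2) hpq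
    have hcardS : S.card = (μ r - (k-1)) * A μ (r+1) m (k-1) := by
      rw [hS, Finset.card_sigma]
      have : ∀ s' ∈ PlF μ (r+1) m (k-1),
          (Finset.Icc 1 (μ r) \ s'.image Prod.snd).card = μ r - (k-1) := by
        intro s' hs'
        rw [Finset.card_sdiff_of_subset (himg s' hs'), hcardimg s' hs', Nat.card_Icc]
        omega
      rw [Finset.sum_congr rfl this, Finset.sum_const, A, smul_eq_mul, mul_comm]
    rw [← hcardS]
    symm
    apply Finset.card_bij (fun (a : (_ : Finset (ℕ × ℕ)) × ℕ) _ => insert (r, a.2) a.1)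
    · -- maps into
      rintro ⟨s', c⟩ ha
      simp only [hS, Finset.mem_sigma, Finset.mem_sdiff, Finset.mem_Icc] at ha
      obtain ⟨hs', ⟨hc1, hc2⟩, hcnot⟩ := ha
      rw [mem_PlF hμ] at hs'
      obtain ⟨h1, h2, h3⟩ := hs'
      have hrc : (r, c) ∉ s' := by
        intro hmem
        have h := (h2 _ hmem).2.1
        have : r + 1 ≤ r := h
        omega
      simp only [Finset.mem_filter]
      constructor
      · rw [mem_PlF hμ]
        refine ⟨?_, ?_, ?_⟩
        · rw [Finset.card_insert_of_notMem hrc, h1]; omega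
        · intro p hp
          rcases Finset.mem_insert.mp hp with rfl | hp'
          · exact ⟨⟨hr, hc1, hc2⟩, le_rfl, hrm⟩
          · obtain ⟨g1, g2, g3⟩ := h2 p hp'
            exact ⟨g1, by omega, g3⟩
        · intro p hp q hq hpq
          rcases Finset.mem_insert.mp hp with rfl | hp' <;>
            rcases Finset.mem_insert.mp hq with rfl | hq'
          · exact absurd rfl hpq
          · constructor
            · have h := (h2 q hq').2.1
              show r ≠ q.1
              omega
            · intro hcq
              exact hcnot (Finset.mem_image.mpr ⟨q, hq', hcq.symm⟩)
          · constructor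
            · have h := (h2 p hp').2.1
              show p.1 ≠ r
              omega
            · intro hcp
              exact hcnot (Finset.mem_image.mpr ⟨p, hp', hcp⟩)
          · exact h3 p hp' q hq' hpq
      · push_neg
        exact ⟨(r, c), Finset.mem_insert_self _ _, rfl⟩
    · -- injective
      rintro ⟨s₁, c₁⟩ ha₁ ⟨s₂, c₂⟩ ha₂ heq
      simp only [hS, Finset.mem_sigma, Finset.mem_sdiff, Finset.mem_Icc] at ha₁ ha₂
      obtain ⟨hs₁, -, -⟩ := ha₁
      obtain ⟨hs₂, -, -⟩ := ha₂
      rw [mem_PlF hμ] at hs₁ hs₂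
      have hrow₁ : ∀ p ∈ s₁, p.1 ≠ r := by
        intro p hp
        have := (hs₁.2.1 p hp).2.1
        omega
      have hrow₂ : ∀ p ∈ s₂, p.1 ≠ r := by
        intro p hp
        have := (hs₂.2.1 p hp).2.1
        omega
      have hc : c₁ = c₂ := by
        have : (r, c₂) ∈ insert (r, c₁) s₁ := by
          rw [heq]; exact Finset.mem_insert_self _ _
        rcases Finset.mem_insert.mp this with h | h
        · exact ((Prod.mk.injEq _ _ _ _).mp h).2.symm
        · exact absurd rfl (hrow₁ _ h)
      have hseq : s₁ = s₂ := by
        ext x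
        constructor
        · intro hx
          have hx2 : x ∈ insert (r, c₂) s₂ := heq ▸ Finset.mem_insert_of_mem hx
          rcases Finset.mem_insert.mp hx2 with rfl | h
          · exact absurd rfl (hrow₁ _ hx)
          · exact h
        · intro hx
          have hx2 : x ∈ insert (r, c₁) s₁ := heq.symm ▸ Finset.mem_insert_of_mem hx
          rcases Finset.mem_insert.mp hx2 with rfl | h
          · exact absurd rfl (hrow₂ _ hx)
          · exact h
      cases hseq
      cases hc
      rfl
    · -- surjective
      intro s hs
      simp only [Finset.mem_filter] at hs
      obtain ⟨hsP, hex⟩ := hs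
      push_neg at hex
      obtain ⟨p, hp, hpr⟩ := hex
      rw [mem_PlF hμ] at hsP
      obtain ⟨h1, h2, h3⟩ := hsP
      refine ⟨⟨s.erase p, p.2⟩, ?_, ?_⟩
      · simp only [hS, Finset.mem_sigma, Finset.mem_sdiff, Finset.mem_Icc]
        refine ⟨?_, ⟨?_, ?_⟩, ?_⟩
        · rw [mem_PlF hμ]
          refine ⟨?_, ?_, ?_⟩
          · rw [Finset.card_erase_of_mem hp, h1]
          · intro q hq
            obtain ⟨hqp, hq'⟩ := Finset.mem_erase.mp hq
            obtain ⟨g1, g2, g3⟩ := h2 q hq'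
            have hne := (h3 q hq' p hp hqp).1
            exact ⟨g1, by omega, g3⟩
          · intro a ha b hb hab
            exact h3 a (Finset.mem_of_mem_erase ha) b (Finset.mem_of_mem_erase hb) hab
        · exact (h2 p hp).1.2.1
        · have h := (h2 p hp).1.2.2
          rw [hpr] at h
          exact h
        · intro hmem
          simp only [Finset.mem_image] at hmem
          obtain ⟨q, hq, hq2⟩ := hmem
          obtain ⟨hqp, hq'⟩ := Finset.mem_erase.mp hq
          exact (h3 q hq' p hp hqp).2 hq2
      · have hpeq : (r, p.2) = p := by
          rw [← hpr]
        rw [hpeq, Finset.insert_erase hp]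
  rw [A, ← hsplit, hpart1, hpart2]
  rfl

end RookAux
namespace RookAux
open Finset

noncomputable section

def ff (x : ℤ) (j : ℕ) : ℤ := ∏ i ∈ Finset.range j, (x - i)

theorem ff_zero (x : ℤ) : ff x 0 = 1 := by simp [ff]

theorem ff_succ (x : ℤ) (j : ℕ) : ff x (j+1) = ff x j * (x - j) := Finset.prod_range_succ _ _

theorem ff_nat_zero {n j : ℕ} (h : n < j) : ff (n : ℤ) j = 0 :=
  Finset.prod_eq_zero (Finset.mem_range.mpr h) (by simp)

theorem ff_nat_pos (j : ℕ) : 0 < ff (j : ℤ) j := by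
  apply Finset.prod_pos
  intro i hi
  simp only [Finset.mem_range] at hi
  have : (i : ℤ) < j := by exact_mod_cast hi
  omega

theorem A_poly {μ : ℕ → ℕ} (hμ : antit μ) (t : ℕ) :
    ∀ r, 1 ≤ r → ∀ x : ℤ,
      (∏ i ∈ Finset.range t, (x + μ (r + i) + i)) =
      ∑ k ∈ Finset.range (t+1), (A μ r (r + t - 1) k : ℤ) * ff (x + t - 1) (t - k) := by
  induction t with
  | zero =>
    intro r hr x
    simp [A_zero, ff]
  | succ t ih =>
    intro r hr x
    have e1 : r + (t+1) - 1 = r + t := by omega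
    rw [e1]
    have harg : (x + ((t:ℤ)+1) - 1) = x + t := by ring
    have hcast : ((t+1 : ℕ) : ℤ) = (t:ℤ) + 1 := by push_cast; ring
    rw [hcast, harg]
    -- abbreviations
    set y : ℤ := x + t with hy
    -- LHS peel first factor
    rw [Finset.prod_range_succ']
    have hprod : (∏ i ∈ Finset.range t, (x + μ (r + (i+1)) + ((i:ℤ)+1)))
        = ∑ k ∈ Finset.range (t+1), (A μ (r+1) (r + t) k : ℤ) * ff y (t - k) := by
      have hstep : ∀ i ∈ Finset.range t,
          (x + (μ (r + (i+1)) : ℤ) + ((i:ℤ)+1)) = ((x+1) + μ ((r+1) + i) + i) := by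
        intro i _
        have : r + (i+1) = (r+1) + i := by omega
        rw [this]; ring
      rw [Finset.prod_congr rfl hstep, ih (r+1) (by omega) (x+1)]
      have e2 : (r+1) + t - 1 = r + t := by omega
      have e3 : (x + 1 + (t:ℤ) - 1) = y := by rw [hy]; ring
      rw [e2, e3]
    have hcast2 : ∀ i : ℕ, ((i+1 : ℕ) : ℤ) = (i:ℤ) + 1 := by intro i; push_cast; ring
    simp only [hcast2, Nat.cast_add, Nat.cast_one]
    rw [hprod]
    -- now: (∑ ...) * (x + μ (r+0) + 0) = target
    have hr0 : r + 0 = r := by omega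
    rw [hr0]
    push_cast
    -- termwise split of LHS
    have L1 : ∀ k ∈ Finset.range (t+1),
        (A μ (r+1) (r + t) k : ℤ) * ff y (t - k) * (x + μ r) =
        (A μ (r+1) (r + t) k : ℤ) * ff y (t + 1 - k)
          + ((μ r - k : ℕ) : ℤ) * (A μ (r+1) (r + t) k : ℤ) * ff y (t - k) := by
      intro k hk
      simp only [Finset.mem_range] at hk
      by_cases hA : A μ (r+1) (r + t) k = 0
      · simp [hA]
      · have hk1 : k ≤ μ (r+1) := A_cols hμ (by omega) hA
        have hk2 : k ≤ μ r := le_trans hk1 (hμ r (r+1) hr (by omega))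
        have hkt : k ≤ t := by omega
        have hff : ff y (t + 1 - k) = ff y (t - k) * (y - (t - k : ℕ)) := by
          have : t + 1 - k = (t - k) + 1 := by omega
          rw [this, ff_succ]
        rw [hff]
        have hc1 : ((t - k : ℕ) : ℤ) = (t:ℤ) - k := by
          have := hkt; push_cast [Nat.cast_sub this]; ring
        have hc2 : ((μ r - k : ℕ) : ℤ) = (μ r : ℤ) - k := by
          push_cast [Nat.cast_sub hk2]; ring
        rw [hc1, hc2, hy]
        ring
    rw [Finset.sum_mul]
    simp only [add_zero]
    rw [Finset.sum_congr rfl L1, Finset.sum_add_distrib]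
    -- RHS: expand target via sum_range_succ' and A_rec
    have R1 : ∀ k ∈ Finset.range (t+1),
        (A μ r (r + t) (k+1) : ℤ) * ff y (t + 1 - (k+1)) =
        (A μ (r+1) (r + t) (k+1) : ℤ) * ff y (t - k)
          + ((μ r - k : ℕ) : ℤ) * (A μ (r+1) (r + t) k : ℤ) * ff y (t - k) := by
      intro k hk
      have hrec := A_rec hμ (r := r) (m := r + t) (k := k+1) hr (by omega) (by omega)
      have e4 : k + 1 - 1 = k := by omega
      rw [e4] at hrec
      have e5 : t + 1 - (k+1) = t - k := by omega
      rw [e5, hrec]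
      push_cast
      ring
    rw [Finset.sum_range_succ' (fun k => (A μ r (r + t) k : ℤ) * ff y (t + 1 - k)) (t+1)]
    rw [Finset.sum_congr rfl R1, Finset.sum_add_distrib]
    -- remaining bookkeeping
    have hA0 : A μ r (r + t) 0 = 1 := A_zero μ r (r+t)
    have hAtop : A μ (r+1) (r + t) (t+1) = 0 := by
      by_contra hne
      have := A_rows hμ hne
      omega
    have hfirst : ∑ k ∈ Finset.range (t+1), (A μ (r+1) (r + t) k : ℤ) * ff y (t + 1 - k)
        = (∑ k ∈ Finset.range t, (A μ (r+1) (r + t) (k+1) : ℤ) * ff y (t - k))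
          + ff y (t+1) := by
      rw [Finset.sum_range_succ' (fun k => (A μ (r+1) (r + t) k : ℤ) * ff y (t + 1 - k)) t]
      congr 1
      · apply Finset.sum_congr rfl
        intro k hk
        have : t + 1 - (k+1) = t - k := by omega
        rw [this]
      · rw [A_zero]; simp
    have hsecond : ∑ k ∈ Finset.range (t+1), (A μ (r+1) (r + t) (k+1) : ℤ) * ff y (t - k)
        = ∑ k ∈ Finset.range t, (A μ (r+1) (r + t) (k+1) : ℤ) * ff y (t - k) := by
      rw [Finset.sum_range_succ, hAtop]
      simp
    rw [hfirst, hsecond, hA0]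
    push_cast
    ring

/-- extraction of coefficients from falling-factorial expansions -/
theorem ff_extract (t : ℕ) (a b : ℕ → ℕ)
    (h : ∀ x : ℤ, ∑ k ∈ Finset.range (t+1), (a k : ℤ) * ff x (t - k)
        = ∑ k ∈ Finset.range (t+1), (b k : ℤ) * ff x (t - k)) :
    ∀ k, k ≤ t → a k = b k := by
  suffices H : ∀ j, ∀ k, k ≤ t → t - k = j → a k = b k by
    intro k hk; exact H (t - k) k hk rfl
  intro j
  induction j using Nat.strong_induction_on with
  | _ j ih =>
    intro k hk hj
    have key : ∑ k' ∈ Finset.range (t+1), ((a k' : ℤ) - b k') * ff (j:ℤ) (t - k') = 0 := by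
      have hx := h (j : ℤ)
      simp only [sub_mul]
      rw [Finset.sum_sub_distrib, hx, sub_self]
    rw [Finset.sum_eq_single k] at key
    · have hne : ff (j:ℤ) (t - k) ≠ 0 := by
        rw [hj]; exact ne_of_gt (ff_nat_pos j)
      have := mul_eq_zero.mp key
      rcases this with h0 | h0
      · have : (a k : ℤ) = b k := by omega
        exact_mod_cast this
      · exact absurd h0 hne
    · intro k' hk' hne
      simp only [Finset.mem_range] at hk'
      rcases Nat.lt_trichotomy (t - k') j with hlt | heq | hgt
      · have : a k' = b k' := ih (t - k') hlt k' (by omega) rfl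
        rw [this]
        simp
      · exfalso
        apply hne
        omega
      · rw [ff_nat_zero hgt]
        simp
    · intro hk'
      exfalso
      apply hk'
      simp only [Finset.mem_range]
      omega

/-- a multiset of integers is determined by the product `∏ (x + c)` as a function of `x` -/
theorem multiset_eq_of_prod (a b : Multiset ℤ)
    (h : ∀ x : ℤ, (a.map (fun c => x + c)).prod = (b.map (fun c => x + c)).prod) :
    a = b := by
  have hP : (a.map (fun c => Polynomial.X + Polynomial.C c)).prod
      = (b.map (fun c => Polynomial.X + Polynomial.C c)).prod := by
    apply Polynomial.funext
    intro x
    have hx := h x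
    simpa [Polynomial.eval_multiset_prod, Multiset.map_map, Function.comp] using hx
  have key : ∀ c : Multiset ℤ, (c.map (fun d => Polynomial.X + Polynomial.C d)).prod.roots
      = c.map (fun d => -d) := by
    intro c
    have : c.map (fun d => Polynomial.X + Polynomial.C d)
        = (c.map (fun d => -d)).map (fun d => Polynomial.X - Polynomial.C d) := by
      rw [Multiset.map_map]
      apply Multiset.map_congr rfl
      intro d _
      simp [sub_neg_eq_add]
    rw [this, Polynomial.roots_multiset_prod_X_sub_C]
  have hroots : a.map (fun d => -d) = b.map (fun d => -d) := by
    rw [← key a, ← key b, hP]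
  exact Multiset.map_injective neg_injective hroots

end

end RookAux
namespace RookAux
open Finset

section Salient

variable {μ : ℕ → ℕ} {N m : ℕ}

theorem not_salient_iff {i : ℕ} : ¬ Salient μ i ↔ ∀ j, i < j → i + μ i < j + μ j := by
  unfold Salient
  push_neg
  rfl

theorem salient_le (hN : ∀ i, N < i → μ i = 0) {i : ℕ} (h : Salient μ i) : i ≤ N := by
  by_contra hc
  obtain ⟨j, hj1, hj2⟩ := h
  have h1 : μ i = 0 := hN i (by omega)
  have h2 : μ j = 0 := hN j (by omega)
  omega

theorem d_le (hμ : antit μ) (hN : ∀ i, N < i → μ i = 0) (hm1 : N + μ 1 ≤ m)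
    {i : ℕ} (hi1 : 1 ≤ i) (hi2 : i ≤ m) : i + μ i ≤ m := by
  rcases le_or_gt i N with h | h
  · have := hμ 1 i le_rfl hi1
    omega
  · rw [hN i h]
    omega

variable (μ m) in
/-- the finset of `d`-values on rows `1..m` -/
noncomputable def dimg : Finset ℕ := (Finset.Icc 1 m).image (fun i => i + μ i)

theorem dimg_nonempty (hm : 1 ≤ m) : (dimg μ m).Nonempty :=
  (Finset.Nonempty.image ⟨1, by simp [Finset.mem_Icc]; omega⟩ _)

variable (μ m) in
noncomputable def cmin (hm : 1 ≤ m) : ℕ := (dimg μ m).min' (dimg_nonempty hm)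

theorem cmin_le (hμ : antit μ) (hN : ∀ i, N < i → μ i = 0) (hm1 : N + μ 1 ≤ m)
    (hm : 1 ≤ m) : cmin μ m hm ≤ m := by
  obtain ⟨i, hi, hd⟩ := Finset.mem_image.mp ((dimg μ m).min'_mem (dimg_nonempty hm))
  simp only [Finset.mem_Icc] at hi
  rw [cmin, ← hd]
  exact d_le hμ hN hm1 hi.1 hi.2

theorem cmin_pos (hm : 1 ≤ m) : 1 ≤ cmin μ m hm := by
  obtain ⟨i, hi, hd⟩ := Finset.mem_image.mp ((dimg μ m).min'_mem (dimg_nonempty hm))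
  simp only [Finset.mem_Icc] at hi
  rw [cmin, ← hd]
  omega

theorem cmin_glb (hμ : antit μ) (hN : ∀ i, N < i → μ i = 0) (hm1 : N + μ 1 ≤ m)
    (hm : 1 ≤ m) {j : ℕ} (hj : 1 ≤ j) : cmin μ m hm ≤ j + μ j := by
  rcases le_or_gt j m with h | h
  · exact (dimg μ m).min'_le _ (Finset.mem_image.mpr ⟨j, Finset.mem_Icc.mpr ⟨hj, h⟩, rfl⟩)
  · have := cmin_le (μ := μ) hμ hN hm1 hm
    omega

theorem exists_nonsalient (hμ : antit μ) (hN : ∀ i, N < i → μ i = 0) (hm1 : N + μ 1 ≤ m)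
    (hm : 1 ≤ m) :
    ∀ v, cmin μ m hm ≤ v → v ≤ m →
      ∃ i, 1 ≤ i ∧ i ≤ m ∧ ¬ Salient μ i ∧ i + μ i = v := by
  intro v hv
  induction v, hv using Nat.le_induction with
  | base =>
    intro hcm
    set c := cmin μ m hm with hc
    classical
    set F := (Finset.Icc 1 m).filter (fun i => i + μ i = c) with hF
    have hFne : F.Nonempty := by
      obtain ⟨i, hi, hd⟩ := Finset.mem_image.mp ((dimg μ m).min'_mem (dimg_nonempty hm))
      exact ⟨i, Finset.mem_filter.mpr ⟨hi, hd⟩⟩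
    have hmem := Finset.mem_filter.mp (F.max'_mem hFne)
    simp only [Finset.mem_Icc] at hmem
    refine ⟨F.max' hFne, hmem.1.1, hmem.1.2, ?_, hmem.2⟩
    rintro ⟨j, hj1, hj2⟩
    have hj0 : 1 ≤ j := by omega
    have hge : c ≤ j + μ j := cmin_glb hμ hN hm1 hm hj0
    have heq : j + μ j = c := by omega
    rcases le_or_gt j m with h | h
    · have : j ∈ F := Finset.mem_filter.mpr ⟨Finset.mem_Icc.mpr ⟨hj0, h⟩, heq⟩
      have := F.le_max' j this
      omega
    · have : μ j = 0 := hN j (by omega)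
      have := cmin_le (μ := μ) hμ hN hm1 hm
      omega
  | succ v hv ih =>
    intro hvm
    obtain ⟨i, hi1, hi2, hns, hd⟩ := ih (by omega)
    rw [not_salient_iff] at hns
    have hii : i ≤ v := by omega
    have hnext : (i+1) + μ (i+1) = v + 1 := by
      have h1 : μ (i+1) ≤ μ i := hμ i (i+1) hi1 (by omega)
      have h2 := hns (i+1) (by omega)
      omega
    classical
    set F := (Finset.Icc 1 m).filter (fun j => j + μ j = v + 1) with hF
    have hFne : F.Nonempty :=
      ⟨i+1, Finset.mem_filter.mpr ⟨Finset.mem_Icc.mpr ⟨by omega, by omega⟩, hnext⟩⟩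
    have hmem := Finset.mem_filter.mp (F.max'_mem hFne)
    simp only [Finset.mem_Icc] at hmem
    have hj₀i : i + 1 ≤ F.max' hFne := F.le_max' _
      (Finset.mem_filter.mpr ⟨Finset.mem_Icc.mpr ⟨by omega, by omega⟩, hnext⟩)
    refine ⟨F.max' hFne, hmem.1.1, hmem.1.2, ?_, hmem.2⟩
    rintro ⟨l, hl1, hl2⟩
    have hl0 : 1 ≤ l := by omega
    have hgt := hns l (by omega)
    have heq : l + μ l = v + 1 := by omega
    rcases le_or_gt l m with h | h
    · have : l ∈ F := Finset.mem_filter.mpr ⟨Finset.mem_Icc.mpr ⟨hl0, h⟩, heq⟩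
      have := F.le_max' l this
      omega
    · have : μ l = 0 := hN l (by omega)
      omega

theorem count_identity (hμ : antit μ) (hN : ∀ i, N < i → μ i = 0) (hm1 : N + μ 1 ≤ m)
    (hm : 1 ≤ m) (hNm : N ≤ m) (v : ℕ) :
    ((Finset.Icc 1 m).filter (fun i => i + μ i = v)).card
      = salientCount μ v + (if cmin μ m hm ≤ v ∧ v ≤ m then 1 else 0) := by
  classical
  set F := (Finset.Icc 1 m).filter (fun i => i + μ i = v) with hF
  have hsplit := Finset.card_filter_add_card_filter_not
    (s := F) (p := fun i => Salient μ i)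
  have hsal : (F.filter (fun i => Salient μ i)).card = salientCount μ v := by
    have hset : {i | 1 ≤ i ∧ Salient μ i ∧ i + μ i = v}
        = ↑(F.filter (fun i => Salient μ i)) := by
      ext i
      simp only [Set.mem_setOf_eq, Finset.coe_filter, hF, Finset.mem_filter,
        Finset.mem_Icc, Set.mem_setOf_eq]
      constructor
      · rintro ⟨h1, h2, h3⟩
        exact ⟨⟨⟨h1, le_trans (salient_le hN h2) hNm⟩, h3⟩, h2⟩
      · rintro ⟨⟨⟨h1, h2⟩, h3⟩, h4⟩
        exact ⟨h1, h4, h3⟩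
    rw [salientCount, hset, Set.ncard_coe_finset]
  have hnonsal : (F.filter (fun i => ¬ Salient μ i)).card
      = (if cmin μ m hm ≤ v ∧ v ≤ m then 1 else 0) := by
    split_ifs with hcond
    · obtain ⟨i, hi1, hi2, hns, hd⟩ :=
        exists_nonsalient hμ hN hm1 hm v hcond.1 hcond.2
      rw [Finset.card_eq_one]
      refine ⟨i, ?_⟩
      rw [Finset.eq_singleton_iff_unique_mem]
      constructor
      · exact Finset.mem_filter.mpr ⟨Finset.mem_filter.mpr
          ⟨Finset.mem_Icc.mpr ⟨hi1, hi2⟩, hd⟩, hns⟩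
      · intro j hj
        obtain ⟨hj1, hj2⟩ := Finset.mem_filter.mp hj
        obtain ⟨hj3, hj4⟩ := Finset.mem_filter.mp hj1
        simp only [Finset.mem_Icc] at hj3
        by_contra hne
        rcases Nat.lt_or_ge j i with h | h
        · rw [not_salient_iff] at hj2
          have := hj2 i h
          omega
        · rw [not_salient_iff] at hns
          have := hns j (by omega)
          omega
    · rw [Finset.card_eq_zero]
      rw [Finset.eq_empty_iff_forall_notMem]
      intro i hi
      obtain ⟨hi1, hi2⟩ := Finset.mem_filter.mp hi
      obtain ⟨hi3, hi4⟩ := Finset.mem_filter.mp hi1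
      simp only [Finset.mem_Icc] at hi3
      apply hcond
      constructor
      · rw [← hi4]
        exact cmin_glb hμ hN hm1 hm hi3.1
      · rw [← hi4]
        exact d_le hμ hN hm1 hi3.1 hi3.2
  omega

end Salient

end RookAux
namespace RookAux
open Finset

theorem exists_bound {μ : ℕ → ℕ} (h : {i | μ i ≠ 0}.Finite) :
    ∃ N, ∀ i, N < i → μ i = 0 := by
  obtain ⟨N, hN⟩ := h.bddAbove
  refine ⟨N, fun i hi => ?_⟩
  by_contra hc
  have : i ≤ N := hN hc
  omega

theorem pweight_eq_sum {μ : ℕ → ℕ} (h0 : μ 0 = 0) {N m : ℕ}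
    (hN : ∀ i, N < i → μ i = 0) (hm : N ≤ m) :
    pweight μ = ∑ i ∈ Finset.Icc 1 m, μ i := by
  rw [pweight]
  apply finsum_eq_sum_of_support_subset
  intro i hi
  simp only [Function.mem_support] at hi
  simp only [Finset.coe_Icc, Set.mem_Icc]
  constructor
  · rcases Nat.eq_zero_or_pos i with rfl | h
    · exact absurd h0 hi
    · exact h
  · by_contra hc
    exact hi (hN i (by omega))

theorem prod_Icc_eq_prod_range_aux (f : ℕ → ℤ) (m : ℕ) :
    ∏ i ∈ Finset.Icc 1 m, f i = ∏ i ∈ Finset.range m, f (1 + i) := by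
  refine Finset.prod_bij' (fun a _ => a - 1) (fun a _ => 1 + a) ?_ ?_ ?_ ?_ ?_ <;>
  · intro a ha
    beta_reduce
    simp only [Finset.mem_Icc, Finset.mem_range] at ha ⊢
    first
      | omega
      | (congr 1; omega)

/-- the master identity over rows `1..m` -/
theorem prod_d_eq_sum {μ : ℕ → ℕ} (hμ : antit μ) (m : ℕ) (x : ℤ) :
    ∏ i ∈ Finset.Icc 1 m, (x + ((i + μ i : ℕ) : ℤ)) =
    ∑ k ∈ Finset.range (m+1), (A μ 1 m k : ℤ) * ff (x + m) (m - k) := by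
  have h := A_poly hμ m 1 le_rfl (x+1)
  have e1 : 1 + m - 1 = m := by omega
  rw [e1] at h
  have e2 : x + 1 + (m:ℤ) - 1 = x + m := by ring
  rw [e2] at h
  rw [← h, prod_Icc_eq_prod_range_aux (fun i => x + ((i + μ i : ℕ) : ℤ)) m]
  apply Finset.prod_congr rfl
  intro i _
  push_cast
  ring

theorem sum_d_fibers {μ : ℕ → ℕ} {m : ℕ} (hd : ∀ i ∈ Finset.Icc 1 m, i + μ i ≤ m) :
    ∑ v ∈ Finset.range (m+1), ((Finset.Icc 1 m).filter (fun i => i + μ i = v)).card * v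
      = ∑ i ∈ Finset.Icc 1 m, (i + μ i) := by
  rw [← Finset.sum_fiberwise_of_maps_to (g := fun i => i + μ i)
    (t := Finset.range (m+1)) (fun i hi => Finset.mem_range.mpr (by
      simpa using Nat.lt_succ_of_le (hd i hi))) (fun i => i + μ i)]
  apply Finset.sum_congr rfl
  intro v _
  rw [Finset.sum_congr rfl (fun i hi => (Finset.mem_filter.mp hi).2),
    Finset.sum_const, smul_eq_mul]

theorem prod_d_fibers {μ : ℕ → ℕ} {m : ℕ} (hd : ∀ i ∈ Finset.Icc 1 m, i + μ i ≤ m)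
    (x : ℤ) :
    ∏ i ∈ Finset.Icc 1 m, (x + ((i + μ i : ℕ) : ℤ))
      = ∏ v ∈ Finset.range (m+1),
          (x + v) ^ (((Finset.Icc 1 m).filter (fun i => i + μ i = v)).card) := by
  rw [← Finset.prod_fiberwise_of_maps_to (g := fun i => i + μ i)
    (t := Finset.range (m+1)) (fun i hi => Finset.mem_range.mpr (by
      simpa using Nat.lt_succ_of_le (hd i hi))) (fun i => x + ((i + μ i : ℕ) : ℤ))]
  apply Finset.prod_congr rfl
  intro v _
  rw [Finset.prod_congr rfl (fun i hi => by
      rw [(Finset.mem_filter.mp hi).2] : ∀ i ∈ (Finset.Icc 1 m).filter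
        (fun i => i + μ i = v), x + ((i + μ i : ℕ) : ℤ) = x + (v:ℤ)),
    Finset.prod_const]

theorem counts_eq_of_prods {μ ν : ℕ → ℕ} {m : ℕ}
    (h : ∀ x : ℤ, ∏ i ∈ Finset.Icc 1 m, (x + ((i + μ i : ℕ) : ℤ))
        = ∏ i ∈ Finset.Icc 1 m, (x + ((i + ν i : ℕ) : ℤ))) (v : ℕ) :
    ((Finset.Icc 1 m).filter (fun i => i + μ i = v)).card
      = ((Finset.Icc 1 m).filter (fun i => i + ν i = v)).card := by
  classical
  have hD : (Finset.Icc 1 m).val.map (fun i => ((i + μ i : ℕ) : ℤ))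
      = (Finset.Icc 1 m).val.map (fun i => ((i + ν i : ℕ) : ℤ)) := by
    apply multiset_eq_of_prod
    intro x
    have hx := h x
    rw [Finset.prod_eq_multiset_prod, Finset.prod_eq_multiset_prod] at hx
    simpa [Multiset.map_map, Function.comp] using hx
  have key : ∀ κ : ℕ → ℕ,
      (Multiset.map (fun i => ((i + κ i : ℕ) : ℤ)) (Finset.Icc 1 m).val).count (v : ℤ)
      = ((Finset.Icc 1 m).filter (fun i => i + κ i = v)).card := by
    intro κ
    rw [Multiset.count_map]
    have : Multiset.filter (fun a => (v:ℤ) = ((a + κ a : ℕ) : ℤ)) (Finset.Icc 1 m).val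
        = Multiset.filter (fun a => a + κ a = v) (Finset.Icc 1 m).val := by
      apply Multiset.filter_congr
      intro a _
      constructor
      · intro hh; exact_mod_cast hh.symm
      · intro hh; exact_mod_cast hh.symm
    rw [this]
    rfl
  rw [← key μ, ← key ν, hD]

theorem Icc_sum_cancel {c₁ c₂ m : ℕ} (h1 : 1 ≤ c₁) (h2 : 1 ≤ c₂)
    (hm1 : c₁ ≤ m) (hm2 : c₂ ≤ m)
    (h : ∑ v ∈ Finset.Icc c₁ m, v = ∑ v ∈ Finset.Icc c₂ m, v) : c₁ = c₂ := by
  have key : ∀ a b : ℕ, 1 ≤ a → a < b → b ≤ m →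
      ∑ v ∈ Finset.Icc b m, v < ∑ v ∈ Finset.Icc a m, v := by
    intro a b ha hab hbm
    apply Finset.sum_lt_sum_of_subset
    · intro w hw
      simp only [Finset.mem_Icc] at hw ⊢
      omega
    · exact Finset.mem_Icc.mpr ⟨le_rfl, by omega⟩
    · simp only [Finset.mem_Icc]
      omega
    · omega
    · intro j _ _
      exact Nat.zero_le j
  rcases Nat.lt_trichotomy c₁ c₂ with hlt | heq | hgt
  · have := key c₁ c₂ h1 hlt hm2
    omega
  · exact heq
  · have := key c₂ c₁ h2 hgt hm1
    omega

theorem ind_sum {c m : ℕ} (hc1 : 1 ≤ c) (hc2 : c ≤ m) :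
    ∑ v ∈ Finset.range (m+1), (if c ≤ v ∧ v ≤ m then 1 else 0) * v
      = ∑ v ∈ Finset.Icc c m, v := by
  classical
  have : ∀ v ∈ Finset.range (m+1), (if c ≤ v ∧ v ≤ m then 1 else 0) * v
      = (if c ≤ v ∧ v ≤ m then v else 0) := by
    intro v _
    split_ifs <;> omega
  rw [Finset.sum_congr rfl this, Finset.sum_ite, Finset.sum_const_zero, add_zero]
  apply Finset.sum_congr
  · ext v
    simp only [Finset.mem_filter, Finset.mem_range, Finset.mem_Icc]
    omega
  · intro v _
    rfl

theorem min'_congr {s t : Finset ℕ} (hs : s.Nonempty) (ht : t.Nonempty) (h : s = t) :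
    s.min' hs = t.min' ht := by
  subst h
  rfl

end RookAux
theorem rook_equiv_iff_salient_multiset (n : ℕ) (hn : 1 ≤ n) (μ ν : ℕ → ℕ)
    (hμ : IsPartition μ) (hν : IsPartition ν)
    (hμn : pweight μ = n) (hνn : pweight ν = n) :
    RookEquiv μ ν ↔ ∀ v : ℕ, salientCount μ v = salientCount ν v := by
  classical
  obtain ⟨Nμ, hNμ⟩ := RookAux.exists_bound hμ.2.2
  obtain ⟨Nν, hNν⟩ := RookAux.exists_bound hν.2.2
  have hμa := RookAux.antit_of_isPartition hμ
  have hνa := RookAux.antit_of_isPartition hν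
  set m := Nμ + μ 1 + Nν + ν 1 + 2 with hmdef
  have hm1μ : Nμ + μ 1 ≤ m := by omega
  have hm1ν : Nν + ν 1 ≤ m := by omega
  have hmm : 1 ≤ m := by omega
  have hNμm : Nμ ≤ m := by omega
  have hNνm : Nν ≤ m := by omega
  have hNμ' : ∀ i, m < i → μ i = 0 := fun i hi => hNμ i (by omega)
  have hNν' : ∀ i, m < i → ν i = 0 := fun i hi => hNν i (by omega)
  have hdμ : ∀ i ∈ Finset.Icc 1 m, i + μ i ≤ m := fun i hi => by
    have h := Finset.mem_Icc.mp hi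
    exact RookAux.d_le hμa hNμ hm1μ h.1 h.2
  have hdν : ∀ i ∈ Finset.Icc 1 m, i + ν i ≤ m := fun i hi => by
    have h := Finset.mem_Icc.mp hi
    exact RookAux.d_le hνa hNν hm1ν h.1 h.2
  have hcidμ := RookAux.count_identity hμa hNμ hm1μ hmm hNμm
  have hcidν := RookAux.count_identity hνa hNν hm1ν hmm hNνm
  constructor
  · intro hre v
    have hA : ∀ k, RookAux.A μ 1 m k = RookAux.A ν 1 m k := fun k => by
      rw [← RookAux.rookCount_eq_A hμa hNμ' k, ← RookAux.rookCount_eq_A hνa hNν' k]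
      exact hre k
    have hprod : ∀ x : ℤ,
        ∏ i ∈ Finset.Icc 1 m, (x + ((i + μ i : ℕ) : ℤ))
          = ∏ i ∈ Finset.Icc 1 m, (x + ((i + ν i : ℕ) : ℤ)) := by
      intro x
      rw [RookAux.prod_d_eq_sum hμa m x, RookAux.prod_d_eq_sum hνa m x]
      exact Finset.sum_congr rfl (fun k _ => by rw [hA k])
    have hcnt := RookAux.counts_eq_of_prods hprod
    have hdimg : RookAux.dimg μ m = RookAux.dimg ν m := by
      have h1 : ∀ κ : ℕ → ℕ, (∀ i ∈ Finset.Icc 1 m, i + κ i ≤ m) → RookAux.dimg κ m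
          = (Finset.range (m+1)).filter
              (fun w => ((Finset.Icc 1 m).filter (fun i => i + κ i = w)).card ≠ 0) := by
        intro κ hκ
        ext w
        simp only [RookAux.dimg, Finset.mem_image, Finset.mem_filter, Finset.mem_range,
          ne_eq, Finset.card_eq_zero, ← Finset.not_nonempty_iff_eq_empty, not_not,
          Finset.filter_nonempty_iff]
        constructor
        · rintro ⟨i, hi, rfl⟩
          have h3 := hκ i hi
          exact ⟨by omega, ⟨i, hi, rfl⟩⟩
        · rintro ⟨-, i, hi, hd⟩
          exact ⟨i, hi, hd⟩
      rw [h1 μ hdμ, h1 ν hdν]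
      apply Finset.filter_congr
      intro w _
      rw [hcnt w]
    have hc : RookAux.cmin μ m hmm = RookAux.cmin ν m hmm :=
      RookAux.min'_congr _ _ hdimg
    have e1 := hcidμ v
    have e2 := hcidν v
    rw [hcnt v, e2, hc] at e1
    omega
  · intro hs k
    have hsumμ : ∑ v ∈ Finset.range (m+1),
        ((Finset.Icc 1 m).filter (fun i => i + μ i = v)).card * v
        = (∑ i ∈ Finset.Icc 1 m, i) + n := by
      rw [RookAux.sum_d_fibers hdμ, Finset.sum_add_distrib,
        ← RookAux.pweight_eq_sum hμ.1 hNμ hNμm, hμn]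
    have hsumν : ∑ v ∈ Finset.range (m+1),
        ((Finset.Icc 1 m).filter (fun i => i + ν i = v)).card * v
        = (∑ i ∈ Finset.Icc 1 m, i) + n := by
      rw [RookAux.sum_d_fibers hdν, Finset.sum_add_distrib,
        ← RookAux.pweight_eq_sum hν.1 hNν hNνm, hνn]
    have hEμ : ∑ v ∈ Finset.range (m+1),
        ((Finset.Icc 1 m).filter (fun i => i + μ i = v)).card * v
        = (∑ v ∈ Finset.range (m+1), salientCount μ v * v)
          + ∑ v ∈ Finset.Icc (RookAux.cmin μ m hmm) m, v := by
      rw [Finset.sum_congr rfl (fun v _ => by rw [hcidμ v, add_mul]),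
        Finset.sum_add_distrib,
        RookAux.ind_sum (RookAux.cmin_pos hmm) (RookAux.cmin_le hμa hNμ hm1μ hmm)]
    have hEν : ∑ v ∈ Finset.range (m+1),
        ((Finset.Icc 1 m).filter (fun i => i + ν i = v)).card * v
        = (∑ v ∈ Finset.range (m+1), salientCount ν v * v)
          + ∑ v ∈ Finset.Icc (RookAux.cmin ν m hmm) m, v := by
      rw [Finset.sum_congr rfl (fun v _ => by rw [hcidν v, add_mul]),
        Finset.sum_add_distrib,
        RookAux.ind_sum (RookAux.cmin_pos hmm) (RookAux.cmin_le hνa hNν hm1ν hmm)]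
    have hsalsum : ∑ v ∈ Finset.range (m+1), salientCount μ v * v
        = ∑ v ∈ Finset.range (m+1), salientCount ν v * v :=
      Finset.sum_congr rfl (fun v _ => by rw [hs v])
    have hIcc : ∑ v ∈ Finset.Icc (RookAux.cmin μ m hmm) m, v
        = ∑ v ∈ Finset.Icc (RookAux.cmin ν m hmm) m, v := by
      omega
    have hc : RookAux.cmin μ m hmm = RookAux.cmin ν m hmm :=
      RookAux.Icc_sum_cancel (RookAux.cmin_pos hmm) (RookAux.cmin_pos hmm)
        (RookAux.cmin_le hμa hNμ hm1μ hmm) (RookAux.cmin_le hνa hNν hm1ν hmm) hIcc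
    have hcnt : ∀ v, ((Finset.Icc 1 m).filter (fun i => i + μ i = v)).card
        = ((Finset.Icc 1 m).filter (fun i => i + ν i = v)).card := fun v => by
      rw [hcidμ v, hcidν v, hs v, hc]
    have hprod : ∀ x : ℤ,
        ∏ i ∈ Finset.Icc 1 m, (x + ((i + μ i : ℕ) : ℤ))
          = ∏ i ∈ Finset.Icc 1 m, (x + ((i + ν i : ℕ) : ℤ)) := fun x => by
      rw [RookAux.prod_d_fibers hdμ x, RookAux.prod_d_fibers hdν x]
      exact Finset.prod_congr rfl (fun v _ => by rw [hcnt v])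
    have hff : ∀ x : ℤ,
        ∑ k ∈ Finset.range (m+1), (RookAux.A μ 1 m k : ℤ) * RookAux.ff x (m - k)
          = ∑ k ∈ Finset.range (m+1), (RookAux.A ν 1 m k : ℤ) * RookAux.ff x (m - k) := by
      intro x
      have h0 := hprod (x - m)
      rw [RookAux.prod_d_eq_sum hμa m (x - m), RookAux.prod_d_eq_sum hνa m (x - m)] at h0
      have e : x - (m:ℤ) + m = x := by ring
      rw [e] at h0
      exact h0
    have hA := RookAux.ff_extract m _ _ hff
    rw [RookAux.rookCount_eq_A hμa hNμ' k, RookAux.rookCount_eq_A hνa hNν' k]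
    rcases le_or_gt k m with hk | hk
    · exact hA k hk
    · have z1 : RookAux.A μ 1 m k = 0 := by
        by_contra hz
        have := RookAux.A_rows hμa hz
        omega
      have z2 : RookAux.A ν 1 m k = 0 := by
        by_contra hz
        have := RookAux.A_rows hνa hz
        omega
      rw [z1, z2]
end

section
/- For every partition μ, the staircase rank of μ equals the number of salient rows of μ. -/
theorem staircase_rank_eq_card_salient (μ : ℕ → ℕ) (hμ : IsPartition μ) :
    staircaseRank μ = Set.ncard {i | 1 ≤ i ∧ Salient μ i} := by
  classical
  obtain ⟨h0, hdec, hfin⟩ := hμ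
  -- monotonicity of parts
  have mono : ∀ i j, 1 ≤ i → i ≤ j → μ j ≤ μ i := by
    intro i j hi hij
    induction j, hij using Nat.le_induction with
    | base => exact le_rfl
    | succ j hj ih => exact le_trans (hdec j (le_trans hi hj)) ih
  -- bound on the support
  obtain ⟨L, hL⟩ : ∃ L, ∀ i, L < i → μ i = 0 := by
    obtain ⟨L, hL⟩ := hfin.bddAbove
    exact ⟨L, fun i hi => by_contra fun h => absurd (hL h) (not_le.mpr hi)⟩
  -- the minimum m of i + μ i over i ≥ 1
  set m : ℕ := sInf {v | ∃ i, 1 ≤ i ∧ i + μ i = v} with hm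
  obtain ⟨i₀, hi₀1, hi₀⟩ : ∃ i, 1 ≤ i ∧ i + μ i = m :=
    Nat.sInf_mem (⟨1 + μ 1, 1, le_rfl, rfl⟩ : Set.Nonempty {v | ∃ i, 1 ≤ i ∧ i + μ i = v})
  have hm_le : ∀ i, 1 ≤ i → m ≤ i + μ i := fun i hi => Nat.sInf_le ⟨i, hi, rfl⟩
  have hm1 : 1 ≤ m := le_trans hi₀1 (le_trans (Nat.le_add_right _ _) hi₀.le)
  have hmL : m ≤ L + 1 := by
    have := hm_le (L + 1) (by omega)
    rw [hL (L + 1) (by omega)] at this; omega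
  -- Part 1 : staircaseRank μ = m - 1
  have hrank : staircaseRank μ = m - 1 := by
    have hmem : m - 1 ∈ {k | ∀ i, 1 ≤ i → i ≤ k → k + 1 ≤ μ i + i} := by
      intro i hi hik
      have := hm_le i hi
      omega
    have hub : ∀ k ∈ {k | ∀ i, 1 ≤ i → i ≤ k → k + 1 ≤ μ i + i}, k ≤ m - 1 := by
      intro k hk
      by_cases h : i₀ ≤ k
      · have := hk i₀ hi₀1 h
        omega
      · omega
    unfold staircaseRank
    exact le_antisymm (csSup_le ⟨m - 1, hmem⟩ hub)
      (le_csSup ⟨m - 1, hub⟩ hmem)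
  -- the large bound N
  set N : ℕ := L + μ 1 + 1 with hN
  -- the surjectivity construction : every v ≥ m is i + μ i for a non-salient row i
  have hsurj : ∀ v, m ≤ v → ∃ i, 1 ≤ i ∧ ¬ Salient μ i ∧ i + μ i = v := by
    intro v hv
    set A : Set ℕ := {j | 1 ≤ j ∧ j + μ j ≤ v} with hA
    have hAne : A.Nonempty := ⟨i₀, hi₀1, by omega⟩
    have hAbdd : BddAbove A := ⟨v, fun j hj => le_trans (Nat.le_add_right _ _) hj.2⟩
    set i : ℕ := sSup A with hi
    have hiA : i ∈ A := Nat.sSup_mem hAne hAbdd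
    have hgt : ∀ j, i < j → v < j + μ j := by
      intro j hj
      by_contra h
      exact absurd (le_csSup hAbdd (⟨by omega, by omega⟩ : j ∈ A)) (not_le.mpr hj)
    have h1 : 1 ≤ i := hiA.1
    have hstep : (i + 1) + μ (i + 1) ≤ (i + μ i) + 1 := by
      have := hdec i h1; omega
    have heq : i + μ i = v := by
      have h2 := hgt (i + 1) (by omega)
      have h3 := hiA.2
      omega
    refine ⟨i, h1, ?_, heq⟩
    rintro ⟨j, hj, hjle⟩
    have := hgt j hj
    omega
  -- non-salient rows i ≥ 1 have i + μ i strictly below all later values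
  have hnonsal : ∀ i, ¬ Salient μ i ↔ ∀ j, i < j → i + μ i < j + μ j := by
    intro i
    constructor
    · intro h j hj
      by_contra hc
      exact h ⟨j, hj, by omega⟩
    · rintro h ⟨j, hj, hjle⟩
      exact absurd (h j hj) (by omega)
  -- salient rows lie in Icc 1 N
  have hsal_mem : ∀ i, 1 ≤ i → Salient μ i → i ≤ N := by
    intro i hi ⟨j, hj, hjle⟩
    have hμi : μ i ≠ 0 := by
      intro h; rw [h] at hjle; omega
    have : i ≤ L := by
      by_contra h
      exact hμi (hL i (by omega))
    omega
  -- identify the salient set with a Finset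
  have hSset : {i | 1 ≤ i ∧ Salient μ i} =
      ↑((Finset.Icc 1 N).filter (fun i => Salient μ i)) := by
    ext i
    simp only [Set.mem_setOf_eq, Finset.coe_filter, Finset.mem_Icc]
    constructor
    · rintro ⟨h1, h2⟩; exact ⟨⟨h1, hsal_mem i h1 h2⟩, h2⟩
    · rintro ⟨⟨h1, _⟩, h2⟩; exact ⟨h1, h2⟩
  rw [hSset, Set.ncard_coe_finset]
  -- count the non-salient rows in Icc 1 N
  have hbound : ∀ i, 1 ≤ i → i ≤ N → i + μ i ≤ N := by
    intro i hi hiN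
    by_cases h : i ≤ L
    · have := mono 1 i le_rfl hi
      omega
    · rw [hL i (by omega)]; omega
  have hTcard : ((Finset.Icc 1 N).filter (fun i => ¬ Salient μ i)).card
      = (Finset.Icc m N).card := by
    apply Finset.card_bij (fun i _ => i + μ i)
    · intro i hi
      simp only [Finset.mem_filter, Finset.mem_Icc] at hi
      simp only [Finset.mem_Icc]
      exact ⟨hm_le i hi.1.1, hbound i hi.1.1 hi.1.2⟩
    · intro a ha b hb hab
      simp only [Finset.mem_filter, Finset.mem_Icc] at ha hb
      rcases lt_trichotomy a b with h | h | h
      · have := (hnonsal a).mp ha.2 b h; omega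
      · exact h
      · have := (hnonsal b).mp hb.2 a h; omega
    · intro v hv
      simp only [Finset.mem_Icc] at hv
      obtain ⟨i, h1, h2, h3⟩ := hsurj v hv.1
      refine ⟨i, ?_, h3⟩
      simp only [Finset.mem_filter, Finset.mem_Icc]
      exact ⟨⟨h1, by omega⟩, h2⟩
  have htotal := Finset.card_filter_add_card_filter_not
    (s := Finset.Icc 1 N) (p := fun i => Salient μ i)
  rw [hTcard] at htotal
  rw [Nat.card_Icc, Nat.card_Icc] at htotal
  omega
end

section
/- Let μ be a partition and let i be a salient row of μ such that exactly k salient rows of μ have index ≥ i (i.e., row i is the k-th salient row from the bottom). Then μ_i ≥ k. -/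
private lemma sal_mu_pos (μ : ℕ → ℕ) {j : ℕ} (h : Salient μ j) : 1 ≤ μ j := by
  obtain ⟨m, hm1, hm2⟩ := h; omega

private lemma mu_anti (μ : ℕ → ℕ) (hμ : IsPartition μ) :
    ∀ a b, 1 ≤ a → a ≤ b → μ b ≤ μ a := by
  intro a b ha hab
  induction b with
  | zero => omega
  | succ n ih =>
    rcases Nat.lt_or_ge a (n+1) with h | h
    · exact le_trans (hμ.2.1 n (by omega)) (ih (by omega))
    · have : a = n + 1 := by omega
      simp [this]

private lemma sal_fin (μ : ℕ → ℕ) (hμ : IsPartition μ) (i : ℕ) :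
    {j | i ≤ j ∧ Salient μ j}.Finite := by
  apply hμ.2.2.subset
  intro j hj
  have := sal_mu_pos μ hj.2
  simp only [Set.mem_setOf_eq]; omega

private lemma sal_aux (μ : ℕ → ℕ) (hμ : IsPartition μ) :
    ∀ k i, 1 ≤ i → Salient μ i →
      Set.ncard {j | i ≤ j ∧ Salient μ j} = k → k ≤ μ i := by
  intro k
  induction k using Nat.strong_induction_on with
  | _ k IH =>
    intro i hi hs hk
    obtain ⟨m, hmgt, hmle⟩ := hs
    by_cases hex : ∃ j'', m ≤ j'' ∧ Salient μ j''
    · -- Case B: some salient row ≥ m; take the least one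
      obtain ⟨j'', ⟨hj''m, hj''s⟩, hmin⟩ := Nat.lt_wfRel.wf.has_min _ hex
      set T : Set ℕ := {j | i ≤ j ∧ Salient μ j} with hT
      set T'' : Set ℕ := {j | j'' ≤ j ∧ Salient μ j} with hT''
      have hfinT : T.Finite := sal_fin μ hμ i
      have hfinT'' : T''.Finite := sal_fin μ hμ j''
      have hsub : T'' ⊆ T := fun j hj => ⟨by have := hj.1; omega, hj.2⟩
      have hine : i ∈ T ∧ i ∉ T'' := by
        refine ⟨⟨le_refl i, ⟨m, hmgt, hmle⟩⟩, ?_⟩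
        simp only [hT'', Set.mem_setOf_eq, not_and]
        intro h; omega
      have hlt : T''.ncard < T.ncard :=
        Set.ncard_lt_ncard ⟨hsub, fun h => hine.2 (h hine.1)⟩ hfinT
      have hIH : T''.ncard ≤ μ j'' := by
        apply IH T''.ncard (by omega) j'' (by omega) hj''s rfl
      -- T \ T'' ⊆ Ico i m
      have hdiff : T \ T'' ⊆ Set.Ico i m := by
        rintro j ⟨⟨hij, hjs⟩, hnot⟩
        refine ⟨hij, ?_⟩
        by_contra hge
        push_neg at hge
        rcases Nat.lt_or_ge j j'' with h | h
        · exact absurd h (hmin j ⟨hge, hjs⟩)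
        · exact hnot ⟨h, hjs⟩
      have h1 : T.ncard ≤ (T \ T'').ncard + T''.ncard := by
        calc T.ncard ≤ ((T \ T'') ∪ T'').ncard := by
              apply Set.ncard_le_ncard _ ((hfinT.diff).union hfinT'')
              intro x hx
              by_cases hx'' : x ∈ T''
              · exact Or.inr hx''
              · exact Or.inl ⟨hx, hx''⟩
          _ ≤ (T \ T'').ncard + T''.ncard := Set.ncard_union_le _ _
      have h2 : (T \ T'').ncard ≤ m - i := by
        have h := Set.ncard_le_ncard hdiff (Set.finite_Ico i m)
        have he : (Set.Ico i m).ncard = m - i := by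
          rw [Set.ncard_eq_toFinset_card', Set.toFinset_Ico, Nat.card_Ico]
        omega
      have h3 : μ j'' ≤ μ m := mu_anti μ hμ m j'' (by omega) hj''m
      omega
    · -- Case A: no salient row ≥ m
      push_neg at hex
      have hsub : {j | i ≤ j ∧ Salient μ j} ⊆ Set.Ico i m := by
        rintro j ⟨hij, hjs⟩
        refine ⟨hij, ?_⟩
        by_contra hge
        push_neg at hge
        exact absurd hjs (hex j hge)
      have h := Set.ncard_le_ncard hsub (Set.finite_Ico i m)
      have he : (Set.Ico i m).ncard = m - i := by
        rw [Set.ncard_eq_toFinset_card', Set.toFinset_Ico, Nat.card_Ico]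
      omega

theorem salient_row_length (μ : ℕ → ℕ) (hμ : IsPartition μ)
    (i k : ℕ) (hi : 1 ≤ i) (hs : Salient μ i)
    (hk : Set.ncard {j | i ≤ j ∧ Salient μ j} = k) :
    k ≤ μ i := sal_aux μ hμ k i hi hs hk
end

section
/- Let μ be a partition and let L₁, …, L_k be a sequence of k nested L's in μ whose weight equals w_k(μ). Then for each 1 ≤ c ≤ k, the corner of L_c lies in a salient row of μ. -/
section AuxNested

private lemma chain_dec_aux {k : ℕ} (g : Fin k → ℕ)
    (h : ∀ a b : Fin k, a < b → g b < g a) :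
    ∀ b d : Fin k, b ≤ d → g d + d.val ≤ g b + b.val := by
  have key : ∀ n : ℕ, ∀ b d : Fin k, b.val + n = d.val → g d + n ≤ g b := by
    intro n
    induction n with
    | zero =>
      intro b d hbd
      have : b = d := Fin.ext (by omega)
      simp [this]
    | succ n ih =>
      intro b d hbd
      have hlt : b.val + n < k := by have := d.isLt; omega
      have h1 : g d < g ⟨b.val + n, hlt⟩ := h ⟨b.val + n, hlt⟩ d (by
        rw [Fin.lt_def]; simp; omega)
      have h2 : g ⟨b.val + n, hlt⟩ + n ≤ g b := ih b ⟨b.val + n, hlt⟩ rfl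
      omega
  intro b d hbd
  rw [Fin.le_def] at hbd
  have := key (d.val - b.val) b d (by omega)
  omega

private lemma chain_inc_aux {k : ℕ} (g : Fin k → ℕ)
    (h : ∀ a b : Fin k, a < b → g a < g b) :
    ∀ b d : Fin k, b ≤ d → g b + d.val ≤ g d + b.val := by
  have key : ∀ n : ℕ, ∀ b d : Fin k, b.val + n = d.val → g b + n ≤ g d := by
    intro n
    induction n with
    | zero =>
      intro b d hbd
      have : b = d := Fin.ext (by omega)
      simp [this]
    | succ n ih =>
      intro b d hbd
      have hlt : b.val + n < k := by have := d.isLt; omega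
      have h1 : g ⟨b.val + n, hlt⟩ < g d := h ⟨b.val + n, hlt⟩ d (by
        rw [Fin.lt_def]; simp; omega)
      have h2 : g b + n ≤ g ⟨b.val + n, hlt⟩ := ih b ⟨b.val + n, hlt⟩ rfl
      omega
  intro b d hbd
  rw [Fin.le_def] at hbd
  have := key (d.val - b.val) b d (by omega)
  omega

private lemma tele_aux (g : ℕ → ℕ) (n : ℕ) :
    ∑ s ∈ Finset.range n, g (s + 1) + g 0 = ∑ s ∈ Finset.range n, g s + g n := by
  rw [← Finset.sum_range_succ', Finset.sum_range_succ]

private lemma nestedLMax_bddAbove (μ : ℕ → ℕ) (hμ : IsPartition μ) (k : ℕ) :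
    BddAbove {w | ∃ c : Fin k → ℕ × ℕ, IsNested μ c ∧ ∑ a, LWeight μ (c a) = w} := by
  obtain ⟨N, hN⟩ := hμ.2.2.bddAbove
  have hN' : ∀ x, μ x ≠ 0 → x ≤ N := fun x hx => hN hx
  set Mv := (Finset.range (N + 1)).sup μ with hMv
  have hval : ∀ x, μ x ≤ Mv := by
    intro x
    by_cases hx : μ x = 0
    · simp [hx]
    · have hxN := hN' x hx
      exact Finset.le_sup (Finset.mem_range.mpr (by omega))
  refine ⟨k * (Mv + N), ?_⟩
  rintro w ⟨c, hc, rfl⟩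
  have hterm : ∀ b : Fin k, LWeight μ (c b) ≤ Mv + N := by
    intro b
    obtain ⟨h1, h2, h3⟩ := hc.1 b
    have hne : μ (c b).1 ≠ 0 := by omega
    have := hN' _ hne
    have := hval (c b).1
    unfold LWeight
    omega
  calc ∑ b, LWeight μ (c b) ≤ ∑ _b : Fin k, (Mv + N) :=
        Finset.sum_le_sum (fun b _ => hterm b)
    _ = k * (Mv + N) := by simp [Finset.sum_const, Finset.card_univ, mul_comm]

end AuxNested

theorem max_nested_corners_salient (μ : ℕ → ℕ) (hμ : IsPartition μ)
    (k : ℕ) (c : Fin k → ℕ × ℕ) (hc : IsNested μ c)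
    (hw : ∑ a, LWeight μ (c a) = nestedLMax μ k) :
    ∀ a : Fin k, Salient μ (c a).1 := by
  classical
  intro a
  by_contra hna
  obtain ⟨hcell, hnest⟩ := hc
  set i := (c a).1 with hi
  have hNS : ∀ t, i < t → μ i + i + 1 ≤ μ t + t := by
    intro t ht
    by_contra hle
    exact hna ⟨t, ht, by omega⟩
  have hrow : ∀ b d : Fin k, b ≤ d → (c d).1 + d.val ≤ (c b).1 + b.val :=
    chain_dec_aux (fun b => (c b).1) (fun x y h => (hnest x y h).1)
  have hcol : ∀ b d : Fin k, b ≤ d → (c b).2 + d.val ≤ (c d).2 + b.val :=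
    chain_inc_aux (fun b => (c b).2) (fun x y h => (hnest x y h).2)
  set P : ℕ → Prop := fun s => ∃ b : Fin k, b.val + s = a.val ∧ (c b).1 = i + s with hP
  have hP0 : P 0 := ⟨a, by omega, by omega⟩
  set m := Nat.findGreatest P a.val with hm
  have hPm : P m := Nat.findGreatest_spec (Nat.zero_le _) hP0
  have hmle : m ≤ a.val := Nat.findGreatest_le a.val
  obtain ⟨b0, hb0v, hb0r⟩ := hPm
  have hchain : ∀ b : Fin k, a.val ≤ b.val + m → b.val ≤ a.val →
      (c b).1 + b.val = i + a.val := by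
    intro b h1 h2
    have e1 := hrow b a (by rw [Fin.le_def]; omega)
    have e2 := hrow b0 b (by rw [Fin.le_def]; omega)
    omega
  have hmem : ∀ b : Fin k, ((c b).1 + b.val = i + a.val ∧ b.val ≤ a.val) ↔
      (a.val ≤ b.val + m ∧ b.val ≤ a.val) := by
    intro b
    constructor
    · rintro ⟨h1, h2⟩
      refine ⟨?_, h2⟩
      have : a.val - b.val ≤ m :=
        Nat.le_findGreatest (by omega) ⟨b, by omega, by omega⟩
      omega
    · rintro ⟨h1, h2⟩
      exact ⟨hchain b h1 h2, h2⟩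
  set c' : Fin k → ℕ × ℕ := fun b =>
    if (c b).1 + b.val = i + a.val ∧ b.val ≤ a.val then ((c b).1 + 1, (c b).2)
    else c b with hc'
  have hnewcol : ∀ b : Fin k, (c b).1 + b.val = i + a.val → b.val ≤ a.val →
      (c b).2 ≤ μ ((c b).1 + 1) := by
    intro b h1 h2
    have e1 := hcol b a (by rw [Fin.le_def]; omega)
    have e2 : (c a).2 ≤ μ i := by rw [hi]; exact (hcell a).2.2
    have e3 := hNS ((c b).1 + 1) (by omega)
    omega
  have hc'nested : IsNested μ c' := by
    constructor
    · intro b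
      by_cases hb : (c b).1 + b.val = i + a.val ∧ b.val ≤ a.val
      · simp only [hc', if_pos hb]
        obtain ⟨h1, h2, h3⟩ := hcell b
        exact ⟨by omega, h2, hnewcol b hb.1 hb.2⟩
      · simp only [hc', if_neg hb]
        exact hcell b
    · intro x y hxy
      have hxv : x.val < y.val := hxy
      have hr := (hnest x y hxy).1
      have hcc := (hnest x y hxy).2
      by_cases hx : (c x).1 + x.val = i + a.val ∧ x.val ≤ a.val
      · by_cases hy : (c y).1 + y.val = i + a.val ∧ y.val ≤ a.val
        · simp only [hc', if_pos hx, if_pos hy]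
          exact ⟨by omega, hcc⟩
        · simp only [hc', if_pos hx, if_neg hy]
          exact ⟨by omega, hcc⟩
      · by_cases hy : (c y).1 + y.val = i + a.val ∧ y.val ≤ a.val
        · have e1 := hrow x a (by rw [Fin.le_def]; omega)
          have hne : (c x).1 + x.val ≠ i + a.val := fun h => hx ⟨h, by omega⟩
          simp only [hc', if_neg hx, if_pos hy]
          exact ⟨by omega, hcc⟩
        · simp only [hc', if_neg hx, if_neg hy]
          exact ⟨hr, hcc⟩
  set B : Finset (Fin k) :=
    Finset.univ.filter (fun b => (c b).1 + b.val = i + a.val ∧ b.val ≤ a.val) with hB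
  have hBmem : ∀ b : Fin k, b ∈ B ↔ ((c b).1 + b.val = i + a.val ∧ b.val ≤ a.val) := by
    intro b; simp [hB]
  have h1 : ∑ b ∈ B, (LWeight μ (c b) + (c b).2)
      = ∑ s ∈ Finset.range (m + 1), (μ (i + s) + (i + s)) := by
    refine Finset.sum_nbij' (fun b => a.val - b.val)
      (fun s => ⟨a.val - s, Nat.lt_of_le_of_lt (Nat.sub_le _ _) a.isLt⟩)
      ?_ ?_ ?_ ?_ ?_
    · intro b hb
      rw [hBmem] at hb
      simp only [Finset.mem_range]
      have := ((hmem b).mp hb)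
      omega
    · intro s hs
      simp [Finset.mem_range] at hs
      rw [hBmem]
      exact (hmem _).mpr ⟨by simp only [Fin.val_mk]; omega, by simp only [Fin.val_mk]; omega⟩
    · intro b hb
      rw [hBmem] at hb
      apply Fin.ext
      simp
      omega
    · intro s hs
      simp [Finset.mem_range] at hs
      simp
      omega
    · intro b hb
      rw [hBmem] at hb
      obtain ⟨h1, h2⟩ := hb
      have hrow' : (c b).1 = i + (a.val - b.val) := by omega
      have hcb := (hcell b).2.2
      unfold LWeight
      rw [← hrow']
      omega
  have h2 : ∑ b ∈ B, (LWeight μ (c' b) + (c b).2)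
      = ∑ s ∈ Finset.range (m + 1), (μ (i + (s + 1)) + (i + (s + 1))) := by
    refine Finset.sum_nbij' (fun b => a.val - b.val)
      (fun s => ⟨a.val - s, Nat.lt_of_le_of_lt (Nat.sub_le _ _) a.isLt⟩)
      ?_ ?_ ?_ ?_ ?_
    · intro b hb
      rw [hBmem] at hb
      simp [Finset.mem_range]
      have := ((hmem b).mp hb)
      omega
    · intro s hs
      simp [Finset.mem_range] at hs
      rw [hBmem]
      exact (hmem _).mpr ⟨by simp only [Fin.val_mk]; omega, by simp only [Fin.val_mk]; omega⟩
    · intro b hb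
      rw [hBmem] at hb
      apply Fin.ext
      simp
      omega
    · intro s hs
      simp [Finset.mem_range] at hs
      simp
      omega
    · intro b hb
      rw [hBmem] at hb
      obtain ⟨hb1, hb2⟩ := hb
      have hrow' : i + (a.val - b.val + 1) = (c b).1 + 1 := by omega
      have hcb := hnewcol b hb1 hb2
      simp only [hc', if_pos (And.intro hb1 hb2)]
      unfold LWeight
      simp only
      rw [hrow']
      omega
  have htel := tele_aux (fun s => μ (i + s) + (i + s)) (m + 1)
  have hNSm := hNS (i + (m + 1)) (by omega)
  have hs1 : ∑ b ∈ B, (LWeight μ (c b) + (c b).2)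
      = ∑ b ∈ B, LWeight μ (c b) + ∑ b ∈ B, (c b).2 := Finset.sum_add_distrib
  have hs2 : ∑ b ∈ B, (LWeight μ (c' b) + (c b).2)
      = ∑ b ∈ B, LWeight μ (c' b) + ∑ b ∈ B, (c b).2 := Finset.sum_add_distrib
  have hBlt : ∑ b ∈ B, LWeight μ (c b) + 1 ≤ ∑ b ∈ B, LWeight μ (c' b) := by
    simp only [Nat.add_zero] at htel
    omega
  have hcomp : ∑ b ∈ Bᶜ, LWeight μ (c' b) = ∑ b ∈ Bᶜ, LWeight μ (c b) := by
    apply Finset.sum_congr rfl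
    intro b hb
    rw [Finset.mem_compl, hBmem] at hb
    simp only [hc', if_neg hb]
  have htot : ∑ b, LWeight μ (c b) < ∑ b, LWeight μ (c' b) := by
    rw [← Finset.sum_add_sum_compl B (fun b => LWeight μ (c b)),
      ← Finset.sum_add_sum_compl B (fun b => LWeight μ (c' b))]
    omega
  have hbdd := nestedLMax_bddAbove μ hμ k
  have hle : ∑ b, LWeight μ (c' b) ≤ nestedLMax μ k :=
    le_csSup hbdd ⟨c', hc'nested, rfl⟩
  omega
end

section
/- If partitions μ and ν of the same positive integer n are rook equivalent, then μ and ν have the same staircase rank. -/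
lemma part_mono {μ : ℕ → ℕ} (hμ : IsPartition μ) :
    ∀ a b, 1 ≤ a → a ≤ b → μ b ≤ μ a := by
  intro a b ha hab
  induction b with
  | zero => omega
  | succ m ih =>
    rcases Nat.lt_or_ge a (m + 1) with h | h
    · exact le_trans (hμ.2.1 m (by omega)) (ih (by omega))
    · have : a = m + 1 := by omega
      rw [this]

lemma board_finite {μ : ℕ → ℕ} (hμ : IsPartition μ) : (Board μ).Finite := by
  apply Set.Finite.subset (Set.Finite.biUnion hμ.2.2
    (fun i _ => (Set.finite_Icc 1 (μ i)).image (fun j => (i, j))))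
  rintro ⟨i, j⟩ ⟨hi, hj1, hj2⟩
  have hj2' : j ≤ μ i := hj2
  exact Set.mem_biUnion (show μ i ≠ 0 by omega) ⟨j, ⟨hj1, hj2'⟩, rfl⟩

lemma placements_finite {μ : ℕ → ℕ} (hμ : IsPartition μ) (k : ℕ) :
    {s : Finset (ℕ × ℕ) | s.card = k ∧ (∀ p ∈ s, Cell μ p.1 p.2) ∧
      ∀ p ∈ s, ∀ q ∈ s, p ≠ q → p.1 ≠ q.1 ∧ p.2 ≠ q.2}.Finite := by
  have h1 : {s : Finset (ℕ × ℕ) | s.card = k ∧ (∀ p ∈ s, Cell μ p.1 p.2) ∧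
      ∀ p ∈ s, ∀ q ∈ s, p ≠ q → p.1 ≠ q.1 ∧ p.2 ≠ q.2} ⊆
      (fun s : Finset (ℕ × ℕ) => (↑s : Set (ℕ × ℕ))) ⁻¹' {t | t ⊆ Board μ} := by
    intro s hs p hp
    exact hs.2.1 p hp
  exact Set.Finite.subset (Set.Finite.preimage
    (Set.injOn_of_injective Finset.coe_injective)
    ((board_finite hμ).finite_subsets)) h1

lemma rookCount_ne_zero_iff {μ : ℕ → ℕ} (hμ : IsPartition μ) (k : ℕ) :
    rookCount μ k ≠ 0 ↔ ∀ i, 1 ≤ i → i ≤ k → k + 1 ≤ μ i + i := by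
  constructor
  · intro h i hi hik
    obtain ⟨s, hcard, hcell, hdist⟩ := Set.nonempty_of_ncard_ne_zero h
    have hsplit := Finset.card_filter_add_card_filter_not
      (s := s) (p := fun p : ℕ × ℕ => i ≤ p.1)
    set t := s.filter (fun p : ℕ × ℕ => i ≤ p.1) with ht
    set u := s.filter (fun p : ℕ × ℕ => ¬ i ≤ p.1) with hu
    have hucard : u.card ≤ i - 1 := by
      have himg : u.image Prod.fst ⊆ Finset.Icc 1 (i - 1) := by
        intro x hx
        obtain ⟨p, hp, rfl⟩ := Finset.mem_image.mp hx
        have hp' := Finset.mem_filter.mp hp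
        have := (hcell p hp'.1).1
        simp only [Finset.mem_Icc]
        omega
      have hinj : (u.image Prod.fst).card = u.card := by
        apply Finset.card_image_of_injOn
        intro p hp q hq hpq
        by_contra hne
        exact (hdist p (Finset.mem_filter.mp hp).1 q (Finset.mem_filter.mp hq).1 hne).1 hpq
      calc u.card = (u.image Prod.fst).card := hinj.symm
        _ ≤ (Finset.Icc 1 (i - 1)).card := Finset.card_le_card himg
        _ = i - 1 := by rw [Nat.card_Icc]; omega
    have htcard : t.card ≤ μ i := by
      have himg : t.image Prod.snd ⊆ Finset.Icc 1 (μ i) := by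
        intro x hx
        obtain ⟨p, hp, rfl⟩ := Finset.mem_image.mp hx
        have hp' := Finset.mem_filter.mp hp
        obtain ⟨h1, h2, h3⟩ := hcell p hp'.1
        have : μ p.1 ≤ μ i := part_mono hμ i p.1 hi hp'.2
        simp only [Finset.mem_Icc]
        omega
      have hinj : (t.image Prod.snd).card = t.card := by
        apply Finset.card_image_of_injOn
        intro p hp q hq hpq
        by_contra hne
        exact (hdist p (Finset.mem_filter.mp hp).1 q (Finset.mem_filter.mp hq).1 hne).2 hpq
      calc t.card = (t.image Prod.snd).card := hinj.symm
        _ ≤ (Finset.Icc 1 (μ i)).card := Finset.card_le_card himg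
        _ = μ i := by rw [Nat.card_Icc]; omega
    omega
  · intro h
    have hmem : ((Finset.Icc 1 k).image (fun i => (i, k + 1 - i))) ∈
        {s : Finset (ℕ × ℕ) | s.card = k ∧ (∀ p ∈ s, Cell μ p.1 p.2) ∧
          ∀ p ∈ s, ∀ q ∈ s, p ≠ q → p.1 ≠ q.1 ∧ p.2 ≠ q.2} := by
      refine ⟨?_, ?_, ?_⟩
      · rw [Finset.card_image_of_injective _ (fun a b hab => by
          simpa using congrArg Prod.fst hab), Nat.card_Icc]
        omega
      · intro p hp
        obtain ⟨i, hi, rfl⟩ := Finset.mem_image.mp hp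
        simp only [Finset.mem_Icc] at hi
        have := h i hi.1 hi.2
        exact ⟨hi.1, show 1 ≤ k + 1 - i by omega, show k + 1 - i ≤ μ i by omega⟩
      · intro p hp q hq hne
        obtain ⟨i, hi, rfl⟩ := Finset.mem_image.mp hp
        obtain ⟨j, hj, rfl⟩ := Finset.mem_image.mp hq
        simp only [Finset.mem_Icc] at hi hj
        constructor
        · simp only [ne_eq]
          intro hij; apply hne; simp [hij]
        · simp only [ne_eq]
          intro hij; apply hne
          have : i = j := by omega
          simp [this]
    rw [rookCount]
    have hne : {s : Finset (ℕ × ℕ) | s.card = k ∧ (∀ p ∈ s, Cell μ p.1 p.2) ∧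
        ∀ p ∈ s, ∀ q ∈ s, p ≠ q → p.1 ≠ q.1 ∧ p.2 ≠ q.2}.Nonempty := ⟨_, hmem⟩
    exact ((Set.ncard_pos (placements_finite hμ k)).mpr hne).ne'

theorem rook_equiv_same_staircase_rank (n : ℕ) (hn : 1 ≤ n) (μ ν : ℕ → ℕ)
    (hμ : IsPartition μ) (hν : IsPartition ν)
    (hμn : pweight μ = n) (hνn : pweight ν = n)
    (h : RookEquiv μ ν) :
    staircaseRank μ = staircaseRank ν := by 
  unfold staircaseRank
  congr 1
  ext k
  simp only [Set.mem_setOf_eq]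
  rw [← rookCount_ne_zero_iff hμ k, ← rookCount_ne_zero_iff hν k, h k]
end
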